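/- Let G be a group and F̄ the normalized standard resolution. For all s,t ∈ G, the contracting homotopy ψ_{s,t} of F̄ ⊗ F̄ → ℤ → 0 (defined by ψ_{s,t}(1) = s⊗t, ψ_{s,t}(x⊗y) = (s,x)⊗y for deg x > 0, and ψ_{s,t}(x⊗y) = (s,x)⊗y + s⊗(t,y) for deg x = 0) satisfies ψ_{s,t} ∘ ψ_{s,t} = 0. -/

import Mathlib

noncomputable section

open Finsupp TensorProduct

/-- Tuples of length `n+1` in `G`: the basis of degree-`n` part of the bar resolution. -/
abbrev Tup (G : Type) (n : ℕ) := Fin (n + 1) → G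

/-- The total module of the standard (bar) resolution: free `ℤ`-module on all tuples. -/
abbrev Bar (G : Type) : Type := (Σ n : ℕ, Tup G n) →₀ ℤ

/-- The total module of the tensor square of the bar resolution:
free `ℤ`-module on pairs of tuples. -/
abbrev Bar2 (G : Type) : Type := (Σ (p : ℕ) (q : ℕ), Tup G p × Tup G q) →₀ ℤ

variable (G : Type) [Group G]

/-- Basis element of `Bar G` in degree `n`. -/
def bb (n : ℕ) (s : Tup G n) : Bar G := Finsupp.single ⟨n, s⟩ 1

/-- Basis element of `Bar2 G` in bidegree `(p, q)`. -/
def cc (p q : ℕ) (x : Tup G p) (y : Tup G q) : Bar2 G := Finsupp.single ⟨p, q, (x, y)⟩ 1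

/-- The `i`-th face: delete the `i`-th entry of a tuple. -/
def face {n : ℕ} (i : Fin (n + 2)) (s : Tup G (n + 1)) : Tup G n := fun j => s (i.succAbove j)

/-- The simplicial boundary `∂(s₀,…,sₙ) = Σ (-1)ⁱ (s₀,…,ŝᵢ,…,sₙ)` on the bar resolution. -/
def bnd : Bar G →ₗ[ℤ] Bar G :=
  Finsupp.lift (Bar G) ℤ _ fun w =>
    match w with
    | ⟨0, _⟩ => 0
    | ⟨n + 1, s⟩ => ∑ i : Fin (n + 2), ((-1 : ℤ) ^ (i : ℕ)) • bb G n (face G i s)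

/-- The augmentation `ε : F₀ → ℤ` (extended by zero to the total module). -/
def aug : Bar G →ₗ[ℤ] ℤ := Finsupp.lift ℤ ℤ _ fun w => if w.1 = 0 then 1 else 0

/-- The diagonal action of `u ∈ G` on the bar resolution. -/
def act (u : G) : Bar G →ₗ[ℤ] Bar G :=
  Finsupp.lift (Bar G) ℤ _ fun w => bb G w.1 fun j => u * w.2 j

/-- Right translation `τₛ(s₀,…,sₙ) = (s₀s,…,sₙs)`. -/
def tau (s : G) : Bar G →ₗ[ℤ] Bar G :=
  Finsupp.lift (Bar G) ℤ _ fun w => bb G w.1 fun j => w.2 j * s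

/-- The contracting homotopy `ψₜ(s₀,…,sₙ) = (t,s₀,…,sₙ)`. -/
def psi (t : G) : Bar G →ₗ[ℤ] Bar G :=
  Finsupp.lift (Bar G) ℤ _ fun w => bb G (w.1 + 1) (Fin.cons t w.2)

/-- The degree `-1` part of the contracting homotopy: `ψₜ(1) = (t) ∈ F₀`. -/
def psiNeg (t : G) : ℤ →ₗ[ℤ] Bar G := LinearMap.toSpanSingleton ℤ (Bar G) (bb G 0 fun _ => t)

/-- The degenerate subcomplex `D ⊆ F`, spanned by tuples with two equal consecutive entries. -/
def degen : Submodule ℤ (Bar G) :=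
  Submodule.span ℤ
    {z | ∃ (n : ℕ) (s : Tup G n) (i : Fin n), s i.castSucc = s i.succ ∧ z = bb G n s}

/-- The tuple `(s₀,…,sᵢ,sᵢs,…,sₙs)` obtained from `(s₀,…,sₙ)`. -/
def ins (s : G) (n : ℕ) (x : Tup G n) (i : Fin (n + 1)) : Tup G (n + 1) := fun j =>
  if _h : (j : ℕ) ≤ (i : ℕ) then x ⟨(j : ℕ), by have := i.isLt; omega⟩
  else x ⟨(j : ℕ) - 1, by have := j.isLt; omega⟩ * s

/-- The homotopy `φₛ(s₀,…,sₙ) = Σ (-1)ⁱ (s₀,…,sᵢ,sᵢs,…,sₙs)` from `τₛ` to the identity. -/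
def phi (s : G) : Bar G →ₗ[ℤ] Bar G :=
  Finsupp.lift (Bar G) ℤ _ fun w =>
    ∑ i : Fin (w.1 + 1), ((-1 : ℤ) ^ (i : ℕ)) • bb G (w.1 + 1) (ins G s w.1 w.2 i)

/-- The boundary on `F ⊗ F`: `∂(x⊗y) = ∂x⊗y + (-1)^{deg x} x⊗∂y`. -/
def bnd2 : Bar2 G →ₗ[ℤ] Bar2 G :=
  Finsupp.lift (Bar2 G) ℤ _ fun w =>
    (match w with
     | ⟨0, _, _, _⟩ => 0
     | ⟨p + 1, q, x, y⟩ => ∑ i : Fin (p + 2), ((-1 : ℤ) ^ (i : ℕ)) • cc G p q (face G i x) y)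
    + (match w with
       | ⟨_, 0, _, _⟩ => 0
       | ⟨p, q + 1, x, y⟩ =>
           ((-1 : ℤ) ^ p) • ∑ i : Fin (q + 2), ((-1 : ℤ) ^ (i : ℕ)) • cc G p q x (face G i y))

/-- The augmentation `ε ⊗ ε` on `F ⊗ F` (extended by zero to the total module). -/
def aug2 : Bar2 G →ₗ[ℤ] ℤ :=
  Finsupp.lift ℤ ℤ _ fun w => if w.1 = 0 ∧ w.2.1 = 0 then 1 else 0

/-- The diagonal action of `u ∈ G` on `F ⊗ F`. -/
def act2 (u : G) : Bar2 G →ₗ[ℤ] Bar2 G :=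
  Finsupp.lift (Bar2 G) ℤ _ fun w =>
    cc G w.1 w.2.1 (fun j => u * w.2.2.1 j) (fun j => u * w.2.2.2 j)

/-- The twist `τ(x⊗y) = (-1)^{deg x · deg y} y⊗x` on `F ⊗ F`. -/
def tau2 : Bar2 G →ₗ[ℤ] Bar2 G :=
  Finsupp.lift (Bar2 G) ℤ _ fun w =>
    ((-1 : ℤ) ^ (w.1 * w.2.1)) • cc G w.2.1 w.1 w.2.2.2 w.2.2.1

/-- The contracting homotopy `ψ_{s,t}` of `F ⊗ F → ℤ → 0`. -/
def psi2 (s t : G) : Bar2 G →ₗ[ℤ] Bar2 G :=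
  Finsupp.lift (Bar2 G) ℤ _ fun w =>
    match w with
    | ⟨0, q, x, y⟩ =>
        cc G 1 q (Fin.cons s x) y + cc G 0 (q + 1) (fun _ => s) (Fin.cons t y)
    | ⟨p + 1, q, x, y⟩ => cc G (p + 2) q (Fin.cons s x) y

/-- The degree `-1` part of `ψ_{s,t}`: `1 ↦ s ⊗ t`. -/
def psi2Neg (s t : G) : ℤ →ₗ[ℤ] Bar2 G :=
  LinearMap.toSpanSingleton ℤ (Bar2 G) (cc G 0 0 (fun _ => s) (fun _ => t))

/-- The degenerate subcomplex `C = D⊗F + F⊗D` of `F ⊗ F`. -/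
def degen2 : Submodule ℤ (Bar2 G) :=
  Submodule.span ℤ
    {z | ∃ (p q : ℕ) (x : Tup G p) (y : Tup G q),
      ((∃ i : Fin p, x i.castSucc = x i.succ) ∨ (∃ i : Fin q, y i.castSucc = y i.succ)) ∧
      z = cc G p q x y}

lemma mem_degen2 (p q : ℕ) (x : Tup G p) (y : Tup G q)
    (h : (∃ i : Fin p, x i.castSucc = x i.succ) ∨ (∃ i : Fin q, y i.castSucc = y i.succ)) :
    cc G p q x y ∈ degen2 G :=
  Submodule.subset_span ⟨p, q, x, y, h, rfl⟩

lemma psi2_cc (s t : G) (p q : ℕ) (x : Tup G p) (y : Tup G q) :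
    psi2 G s t (cc G p q x y) =
      match p, x with
      | 0, x => cc G 1 q (Fin.cons s x) y + cc G 0 (q + 1) (fun _ => s) (Fin.cons t y)
      | p + 1, x => cc G (p + 2) q (Fin.cons s x) y := by
  cases p <;>
  simp [psi2, cc, Finsupp.lift_apply, Finsupp.sum_single_index]

lemma consrep {n : ℕ} (a : G) (x : Tup G n) :
    ∃ i : Fin (n + 2), (Fin.cons a (Fin.cons a x) : Tup G (n + 2)) i.castSucc
      = (Fin.cons a (Fin.cons a x) : Tup G (n + 2)) i.succ :=
  ⟨0, rfl⟩

/-- On the normalized tensor product complex `F̄ ⊗ F̄`, for all `s, t ∈ G` the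
contracting homotopy `ψ_{s,t}` satisfies `ψ_{s,t} ∘ ψ_{s,t} = 0`; equivalently, on `F ⊗ F` the
image of `ψ_{s,t} ∘ ψ_{s,t}` (and of `ψ_{s,t}` applied to `ψ_{s,t}(1) = s ⊗ t`) lies in the
degenerate subcomplex. -/
theorem statement5 (s t : G) :
    (∀ z : Bar2 G, psi2 G s t (psi2 G s t z) ∈ degen2 G) ∧
    psi2 G s t (psi2Neg G s t 1) ∈ degen2 G := by
  have key : ∀ (p q : ℕ) (x : Tup G p) (y : Tup G q),
      psi2 G s t (psi2 G s t (cc G p q x y)) ∈ degen2 G := by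
    intro p q x y
    cases p with
    | zero =>
      rw [psi2_cc]
      simp only [map_add]
      rw [psi2_cc, psi2_cc]
      refine Submodule.add_mem _ (Submodule.subset_span ?_)
        (Submodule.add_mem _ (Submodule.subset_span ?_) (Submodule.subset_span ?_))
      · exact ⟨_, _, _, _, Or.inl (consrep G s x), rfl⟩
      · exact ⟨_, _, _, _, Or.inl ⟨0, by simp⟩, rfl⟩
      · exact ⟨_, _, _, _, Or.inr (consrep G t y), rfl⟩
    | succ p =>
      rw [psi2_cc, psi2_cc]
      exact Submodule.subset_span ⟨_, _, _, _, Or.inl (consrep G s x), rfl⟩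
  constructor
  · intro z
    induction z using Finsupp.induction_linear with
    | zero => simp
    | add a b ha hb => rw [map_add, map_add]; exact Submodule.add_mem _ ha hb
    | single w c =>
      obtain ⟨p, q, x, y⟩ := w
      have : (Finsupp.single (⟨p, q, x, y⟩ : Σ (p : ℕ) (q : ℕ), Tup G p × Tup G q) c : Bar2 G)
          = c • cc G p q x y := by
        simp [cc, Finsupp.smul_single]
      rw [this, map_smul, map_smul]
      exact Submodule.smul_mem _ _ (key p q x y)
  · have : psi2Neg G s t 1 = cc G 0 0 (fun _ => s) (fun _ => t) := by
      simp [psi2Neg]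
    rw [this, psi2_cc]
    refine Submodule.add_mem _ (Submodule.subset_span ?_) (Submodule.subset_span ?_)
    · exact ⟨_, _, _, _, Or.inl ⟨0, by simp⟩, rfl⟩
    · exact ⟨_, _, _, _, Or.inr ⟨0, by simp⟩, rfl⟩
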